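/- Let u_n and v_n be the normalized Maclaurin coefficients of e^{pz}·J_ν(z) and of e^{−pz}·J_ν(z) respectively. Then the n-th normalized Maclaurin coefficient of sinh(pz)·J_ν(z) equals (u_n − v_n)/2 for every n ≥ 0; moreover u_0 = 1, u_1 = p, v_0 = 1, v_1 = −p, and for every n ≥ 1: u_{n+1} = (p(2ν+2n+1)/((n+1)(2ν+n+1)))·u_n − ((p²+1)/((n+1)(2ν+n+1)))·u_{n−1} and v_{n+1} = −(p(2ν+2n+1)/((n+1)(2ν+n+1)))·v_n − ((p²+1)/((n+1)(2ν+n+1)))·v_{n−1}. -/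

import Mathlib

open Complex

/-- The entire part of the Bessel function of the first kind:
`J_ν(z) = (z/2)^ν * besselSeries ν z`. -/
noncomputable def besselSeries (ν : ℂ) (z : ℂ) : ℂ :=
  ∑' k : ℕ, (-1) ^ k * z ^ (2 * k) / (4 ^ k * (Nat.factorial k : ℂ) * Complex.Gamma (ν + (k : ℂ) + 1))

/-- The normalized `n`-th Maclaurin coefficient of `h(z) * J_ν(z)`:
`Γ(ν+1)` times the `n`-th Maclaurin coefficient of `z ↦ h z * besselSeries ν z`. -/
noncomputable def normCoeff (ν : ℂ) (h : ℂ → ℂ) (n : ℕ) : ℂ :=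
  Complex.Gamma (ν + 1) *
    (iteratedDeriv n (fun z => h z * besselSeries ν z) 0 / (Nat.factorial n : ℂ))

open Finset Filter

namespace SinhBesselAux

noncomputable def A (ν : ℂ) (j : ℕ) : ℂ :=
  if Even j then
    (-1) ^ (j / 2) / (4 ^ (j / 2) * (Nat.factorial (j / 2) : ℂ) * Complex.Gamma (ν + ((j / 2 : ℕ) : ℂ) + 1))
  else 0

lemma A_two_mul (ν : ℂ) (k : ℕ) :
    A ν (2 * k) = (-1) ^ k / (4 ^ k * (Nat.factorial k : ℂ) * Complex.Gamma (ν + (k : ℂ) + 1)) := by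
  simp [A, Nat.mul_div_cancel_left k (by norm_num : 0 < 2)]

lemma A_odd (ν : ℂ) {j : ℕ} (h : ¬ Even j) : A ν j = 0 := by simp [A, h]

variable {ν : ℂ} (hν : ∀ n : ℕ, 2 * ν + (n : ℂ) + 1 ≠ 0)
include hν

lemma Gamma_ne (k : ℕ) : Complex.Gamma (ν + (k : ℂ) + 1) ≠ 0 := by
  apply Complex.Gamma_ne_zero
  intro m hm
  apply hν (2 * (k + m) + 1)
  push_cast
  linear_combination 2 * hm

lemma nu_add_ne (k : ℕ) : ν + (k : ℂ) + 1 ≠ 0 := by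
  intro h
  apply hν (2 * k + 1)
  push_cast
  linear_combination 2 * h

lemma summable_A_even (z : ℂ) : Summable fun k : ℕ => ‖A ν (2 * k) * z ^ (2 * k)‖ := by
  apply summable_of_ratio_norm_eventually_le (r := 1/2) (by norm_num)
  simp only [norm_norm]
  filter_upwards [eventually_ge_atTop (Nat.ceil (‖ν‖ + ‖z‖ * ‖z‖))] with k hk
  have h2 : ((Nat.factorial k : ℂ)) ≠ 0 := by exact_mod_cast (Nat.factorial_pos k).ne'
  have h3 : (ν + (k : ℂ) + 1) ≠ 0 := nu_add_ne hν k
  have h4 : ((k : ℂ) + 1) ≠ 0 := by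
    have := Nat.cast_add_one_ne_zero (R := ℂ) k
    push_cast at this
    exact this
  have hG1 : Complex.Gamma (ν + ((k+1 : ℕ) : ℂ) + 1)
      = (ν + (k : ℂ) + 1) * Complex.Gamma (ν + (k : ℂ) + 1) := by
    push_cast
    rw [show ν + ((k : ℂ) + 1) + 1 = (ν + (k : ℂ) + 1) + 1 by ring,
      Complex.Gamma_add_one _ (nu_add_ne hν k)]
  have key : A ν (2 * (k + 1)) * z ^ (2 * (k + 1))
      = (A ν (2 * k) * z ^ (2 * k)) * (z ^ 2 / (4 * ((k : ℂ) + 1) * (ν + (k : ℂ) + 1))) * (-1) := by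
    rw [A_two_mul, A_two_mul, hG1, Nat.factorial_succ]
    push_cast
    field_simp
    ring
  -- bounds
  have hzk : ‖z‖ * ‖z‖ ≤ (k : ℝ) - ‖ν‖ := by
    have := Nat.le_of_ceil_le hk
    linarith
  have hnk : ‖((k : ℂ) + 1)‖ = (k : ℝ) + 1 := by
    rw [show ((k : ℂ) + 1) = ((k + 1 : ℕ) : ℂ) by push_cast; ring, Complex.norm_natCast]
    push_cast
    ring
  have h5 : ‖((k : ℂ) + 1)‖ ≤ ‖ν + ((k : ℂ) + 1)‖ + ‖ν‖ := by
    simpa using norm_sub_le (ν + ((k : ℂ) + 1)) ν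
  have h6 : (k : ℝ) + 1 - ‖ν‖ ≤ ‖ν + (k : ℂ) + 1‖ := by
    rw [show ν + (k : ℂ) + 1 = ν + ((k : ℂ) + 1) by ring]
    rw [hnk] at h5
    linarith
  have hD : 4 * ((k : ℝ) + 1) * ((k : ℝ) + 1 - ‖ν‖)
      ≤ ‖(4 : ℂ) * ((k : ℂ) + 1) * (ν + (k : ℂ) + 1)‖ := by
    rw [norm_mul, norm_mul, hnk]
    have h7 : ‖(4 : ℂ)‖ = 4 := by norm_num
    rw [h7]
    have hk1 : (0:ℝ) ≤ 4 * ((k : ℝ) + 1) := by positivity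
    have hnn : (0:ℝ) ≤ (k : ℝ) + 1 - ‖ν‖ := by
      nlinarith [norm_nonneg z]
    calc 4 * ((k : ℝ) + 1) * ((k : ℝ) + 1 - ‖ν‖)
        ≤ 4 * ((k : ℝ) + 1) * ‖ν + (k : ℂ) + 1‖ := by
          rw [mul_assoc, mul_assoc]
          apply mul_le_mul_of_nonneg_left _ (by norm_num : (0:ℝ) ≤ 4)
          apply mul_le_mul_of_nonneg_left h6 (by positivity)
      _ = 4 * ((k : ℝ) + 1) * ‖ν + (k : ℂ) + 1‖ := by ring
  have hb : ‖z ^ 2 / ((4 : ℂ) * ((k : ℂ) + 1) * (ν + (k : ℂ) + 1))‖ ≤ 1/2 := by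
    rw [norm_div, norm_pow]
    have hDpos : (0:ℝ) < ‖(4 : ℂ) * ((k : ℂ) + 1) * (ν + (k : ℂ) + 1)‖ := by
      have : (4 : ℂ) * ((k : ℂ) + 1) * (ν + (k : ℂ) + 1) ≠ 0 :=
        mul_ne_zero (mul_ne_zero (by norm_num) h4) h3
      exact norm_pos_iff.mpr this
    rw [div_le_iff₀ hDpos]
    nlinarith [norm_nonneg z, norm_nonneg ν, Nat.cast_nonneg (α := ℝ) k]
  rw [key]
  calc ‖A ν (2 * k) * z ^ (2 * k) * (z ^ 2 / (4 * ((k : ℂ) + 1) * (ν + (k : ℂ) + 1))) * (-1)‖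
      = ‖A ν (2 * k) * z ^ (2 * k)‖ * ‖z ^ 2 / ((4 : ℂ) * ((k : ℂ) + 1) * (ν + (k : ℂ) + 1))‖ := by
        rw [norm_mul, norm_mul]
        simp
    _ ≤ ‖A ν (2 * k) * z ^ (2 * k)‖ * (1/2) :=
        mul_le_mul_of_nonneg_left hb (norm_nonneg _)
    _ = 1/2 * ‖A ν (2 * k) * z ^ (2 * k)‖ := by ring

omit hν in
lemma two_mul_inj : Function.Injective (fun k : ℕ => 2 * k) := by
  intro a b h
  simp only at h
  omega

omit hν in
lemma A_vanish (z : ℂ) : ∀ j ∉ Set.range (fun k : ℕ => 2 * k), A ν j * z ^ j = 0 := by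
  intro j hj
  have : ¬ Even j := by
    rintro ⟨m, hm⟩
    exact hj ⟨m, by show 2 * m = j; omega⟩
  simp [A_odd ν this]

lemma summable_A (z : ℂ) : Summable fun j : ℕ => ‖A ν j * z ^ j‖ := by
  rw [← Function.Injective.summable_iff two_mul_inj (f := fun j => ‖A ν j * z ^ j‖)
    (by intro j hj; show ‖A ν j * z ^ j‖ = 0; rw [A_vanish z j hj]; simp)]
  exact (summable_A_even hν z).congr (fun k => rfl)

omit hν in
lemma bessel_eq (z : ℂ) : besselSeries ν z = ∑' j : ℕ, A ν j * z ^ j := by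
  have hsupp : Function.support (fun j => A ν j * z ^ j) ⊆ Set.range (fun k : ℕ => 2 * k) := by
    intro j hj
    by_contra hc
    exact hj (A_vanish z j hc)
  rw [besselSeries, ← Function.Injective.tsum_eq two_mul_inj hsupp]
  apply tsum_congr
  intro k
  show (-1) ^ k * z ^ (2 * k) / (4 ^ k * (Nat.factorial k : ℂ) * Complex.Gamma (ν + (k : ℂ) + 1))
    = A ν (2 * k) * z ^ (2 * k)
  rw [A_two_mul]
  ring

/-- Key lemma: the normalized coefficients of `h · besselSeries` via Cauchy products. -/
lemma normCoeff_eq (e : ℕ → ℂ) (h : ℂ → ℂ)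
    (he : ∀ z : ℂ, Summable fun i => ‖e i * z ^ i‖)
    (hh : ∀ z : ℂ, h z = ∑' i : ℕ, e i * z ^ i) (n : ℕ) :
    normCoeff ν h n = Complex.Gamma (ν + 1) *
      ∑ i ∈ range (n + 1), e i * A ν (n - i) := by
  set C : ℕ → ℂ := fun n => ∑ i ∈ range (n + 1), e i * A ν (n - i) with hC
  have hCnorm : Summable fun n => ‖C n‖ := by
    have := summable_norm_sum_mul_range_of_summable_norm (he 1) (summable_A hν 1)
    simpa [hC] using this
  have hq : HasFPowerSeriesOnBall (fun z => h z * besselSeries ν z)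
      (FormalMultilinearSeries.ofScalars ℂ C) 0 1 := by
    refine ⟨?_, by norm_num, ?_⟩
    · apply FormalMultilinearSeries.le_radius_of_summable_norm
      simp only [FormalMultilinearSeries.ofScalars_norm, NNReal.coe_one, one_pow, mul_one]
      exact hCnorm
    · intro y _
      simp only [FormalMultilinearSeries.ofScalars_apply_eq, smul_eq_mul, zero_add]
      have hsum := hasSum_sum_range_mul_of_summable_norm (he y) (summable_A hν y)
      rw [← hh y, ← bessel_eq y] at hsum
      convert hsum using 2 with m
      · rfl
      rw [hC]
      simp only [Finset.sum_mul]
      apply Finset.sum_congr rfl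
      intro i hi
      have hi' : i ≤ m := by
        simpa [Nat.lt_succ_iff] using hi
      have : y ^ i * y ^ (m - i) = y ^ m := by
        rw [← pow_add]
        congr 1
        omega
      calc e i * A ν (m - i) * y ^ m = e i * A ν (m - i) * (y ^ i * y ^ (m - i)) := by rw [this]
        _ = e i * y ^ i * (A ν (m - i) * y ^ (m - i)) := by ring
  have hfd := hq.factorial_smul (1 : ℂ) n
  rw [FormalMultilinearSeries.ofScalars_apply_eq] at hfd
  have hit : iteratedDeriv n (fun z => h z * besselSeries ν z) 0
      = (Nat.factorial n : ℂ) * C n := by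
    rw [iteratedDeriv_eq_iteratedFDeriv, ← hfd]
    simp [nsmul_eq_mul]
  rw [normCoeff, hit]
  have hfne : ((Nat.factorial n : ℂ)) ≠ 0 := by exact_mod_cast (Nat.factorial_pos n).ne'
  field_simp [hC]
  rfl

lemma A_rec (j : ℕ) :
    (j : ℂ) * (2 * ν + (j : ℂ)) * A ν j = -(if 2 ≤ j then A ν (j - 2) else 0) := by
  match j with
  | 0 => simp
  | 1 => simp [A_odd ν (by decide : ¬ Even 1)]
  | (j + 2) =>
    simp only [show 2 ≤ j + 2 by omega, if_true, Nat.add_sub_cancel]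
    by_cases hj : Even j
    · obtain ⟨k, rfl⟩ := hj
      have h2k : k + k = 2 * k := by ring
      rw [h2k, show 2 * k + 2 = 2 * (k + 1) by ring, A_two_mul, A_two_mul]
      have hG : Complex.Gamma (ν + ((k : ℂ) + 1) + 1) = (ν + k + 1) * Complex.Gamma (ν + k + 1) := by
        rw [show ν + ((k : ℂ) + 1) + 1 = (ν + k + 1) + 1 by ring,
          Complex.Gamma_add_one _ (nu_add_ne hν k)]
      have h1 : Complex.Gamma (ν + (k : ℂ) + 1) ≠ 0 := Gamma_ne hν k
      have h2 : ((Nat.factorial k : ℂ)) ≠ 0 := by exact_mod_cast (Nat.factorial_pos k).ne'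
      have h3 : (ν + (k : ℂ) + 1) ≠ 0 := nu_add_ne hν k
      push_cast [Nat.factorial_succ]
      rw [hG, ← mul_div_assoc, ← neg_div, div_eq_div_iff]
      · ring
      · refine mul_ne_zero (mul_ne_zero (pow_ne_zero _ ?_) (mul_ne_zero ?_ h2)) (mul_ne_zero h3 h1)
        · norm_num
        · have := Nat.cast_add_one_ne_zero (R := ℂ) k
          push_cast at this
          exact this
      · exact mul_ne_zero (mul_ne_zero (pow_ne_zero _ (by norm_num)) h2) h1
    · rw [A_odd ν hj, A_odd ν (by simpa [Nat.even_add] using hj)]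
      simp

/-- The normalized coefficient sum (before multiplying by `Γ(ν+1)`). -/
noncomputable def S (ν : ℂ) (e : ℕ → ℂ) (n : ℕ) : ℂ :=
  ∑ i ∈ range (n + 1), e i * A ν (n - i)

/-- The recurrence for the coefficients of `h·g` when `e` satisfies the
exponential-type recurrence `(i+1) e_{i+1} = p e_i`. -/
lemma S_rec (p : ℂ) (e : ℕ → ℂ) (hE : ∀ i : ℕ, ((i : ℂ) + 1) * e (i + 1) = p * e i)
    (n : ℕ) (hn : 1 ≤ n) :
    ((n : ℂ) + 1) * (2 * ν + (n : ℂ) + 1) * S ν e (n + 1)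
      = p * (2 * ν + 2 * (n : ℂ) + 1) * S ν e n - (p ^ 2 + 1) * S ν e (n - 1) := by
  have hSn1 : S ν e (n - 1) = ∑ i ∈ range n, e i * A ν (n - 1 - i) := by
    rw [S, Nat.sub_add_cancel hn]
  -- Split the LHS termwise
  have hmain : ((n : ℂ) + 1) * (2 * ν + (n : ℂ) + 1) * S ν e (n + 1)
      = (∑ i ∈ range (n + 2), ((n + 1 - i : ℕ) : ℂ) * (2 * ν + ((n + 1 - i : ℕ) : ℂ)) * A ν (n + 1 - i) * e i)
        + ∑ i ∈ range (n + 2), (i : ℂ) * (2 * ν + 2 * ((n : ℂ) + 1) - i) * (e i * A ν (n + 1 - i)) := by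
    rw [S, Finset.mul_sum, ← Finset.sum_add_distrib]
    apply Finset.sum_congr rfl
    intro i hi
    have hi' : i ≤ n + 1 := by simpa [Nat.lt_succ_iff] using hi
    have hc : ((n + 1 - i : ℕ) : ℂ) = (n : ℂ) + 1 - (i : ℂ) := by
      push_cast [Nat.cast_sub hi']
      ring
    rw [hc]
    ring
  -- First sum: apply the A-recurrence
  have hsum1 : (∑ i ∈ range (n + 2), ((n + 1 - i : ℕ) : ℂ) * (2 * ν + ((n + 1 - i : ℕ) : ℂ)) * A ν (n + 1 - i) * e i)
      = - S ν e (n - 1) := by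
    have step : ∀ i ∈ range (n + 2),
        ((n + 1 - i : ℕ) : ℂ) * (2 * ν + ((n + 1 - i : ℕ) : ℂ)) * A ν (n + 1 - i) * e i
          = -((if 2 ≤ n + 1 - i then A ν (n + 1 - i - 2) else 0) * e i) := by
      intro i _
      rw [A_rec hν (n + 1 - i)]
      ring
    rw [Finset.sum_congr rfl step, hSn1]
    rw [Finset.sum_range_succ, Finset.sum_range_succ]
    have e1 : (if 2 ≤ n + 1 - (n + 1) then A ν (n + 1 - (n + 1) - 2) else 0) = 0 := by
      simp
    have e2 : (if 2 ≤ n + 1 - n then A ν (n + 1 - n - 2) else 0) = 0 := by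
      have : n + 1 - n = 1 := by omega
      rw [this]
      norm_num
    rw [e1, e2]
    simp only [neg_zero, add_zero, zero_mul]
    rw [← Finset.sum_neg_distrib]
    apply Finset.sum_congr rfl
    intro i hi
    have hi' : i < n := Finset.mem_range.mp hi
    have hcond : 2 ≤ n + 1 - i := by omega
    have hidx : n + 1 - i - 2 = n - 1 - i := by omega
    rw [if_pos hcond, hidx]
    ring
  -- Second sum: shift the index and use the e-recurrence
  have hsum2 : (∑ i ∈ range (n + 2), (i : ℂ) * (2 * ν + 2 * ((n : ℂ) + 1) - i) * (e i * A ν (n + 1 - i)))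
      = p * (2 * ν + 2 * (n : ℂ) + 1) * S ν e n - p ^ 2 * S ν e (n - 1) := by
    rw [Finset.sum_range_succ' _ (n + 1)]
    simp only [Nat.cast_zero, zero_mul, add_zero, mul_zero, zero_add]
    have step : ∀ i ∈ range (n + 1),
        ((i + 1 : ℕ) : ℂ) * (2 * ν + 2 * ((n : ℂ) + 1) - ((i + 1 : ℕ) : ℂ)) * (e (i + 1) * A ν (n + 1 - (i + 1)))
          = (2 * ν + 2 * (n : ℂ) + 1 - i) * (p * e i) * A ν (n - i) := by
      intro i _
      have hidx : n + 1 - (i + 1) = n - i := by omega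
      rw [hidx, ← hE i]
      push_cast
      ring
    rw [Finset.sum_congr rfl step]
    have split : ∀ i ∈ range (n + 1),
        (2 * ν + 2 * (n : ℂ) + 1 - i) * (p * e i) * A ν (n - i)
          = p * (2 * ν + 2 * (n : ℂ) + 1) * (e i * A ν (n - i)) - p * ((i : ℂ) * e i * A ν (n - i)) := by
      intro i _
      ring
    rw [Finset.sum_congr rfl split, Finset.sum_sub_distrib, ← Finset.mul_sum, ← Finset.mul_sum, ← S]
    congr 1
    -- remaining: p * ∑ i ∈ range (n+1), i * e i * A (n-i) = p^2 * S (n-1)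
    rw [Finset.sum_range_succ' _ n]
    simp only [Nat.cast_zero, zero_mul, add_zero, mul_zero, zero_add]
    have step2 : ∀ i ∈ range n,
        ((i + 1 : ℕ) : ℂ) * e (i + 1) * A ν (n - (i + 1))
          = p * e i * A ν (n - 1 - i) := by
      intro i _
      have hidx : n - (i + 1) = n - 1 - i := by omega
      rw [hidx]
      have := hE i
      push_cast
      rw [this]
    rw [Finset.sum_congr rfl step2, hSn1, pow_two, Finset.mul_sum, Finset.mul_sum]
    apply Finset.sum_congr rfl
    intro i _
    ring
  rw [hmain, hsum1, hsum2]
  ring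

omit hν in
lemma expE_rec (p : ℂ) (i : ℕ) :
    ((i : ℂ) + 1) * (p ^ (i + 1) / (Nat.factorial (i + 1) : ℂ)) = p * (p ^ i / (Nat.factorial i : ℂ)) := by
  have h2 : ((Nat.factorial i : ℂ)) ≠ 0 := by exact_mod_cast (Nat.factorial_pos i).ne'
  have h4 : ((i : ℂ) + 1) ≠ 0 := by
    have := Nat.cast_add_one_ne_zero (R := ℂ) i
    push_cast at this
    exact this
  rw [Nat.factorial_succ]
  push_cast
  field_simp
  ring

omit hν in
lemma expE_summable (p z : ℂ) :
    Summable fun i : ℕ => ‖p ^ i / (Nat.factorial i : ℂ) * z ^ i‖ := by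
  have : (fun i : ℕ => ‖p ^ i / (Nat.factorial i : ℂ) * z ^ i‖)
      = fun i : ℕ => (‖p‖ * ‖z‖) ^ i / (Nat.factorial i : ℝ) := by
    funext i
    rw [norm_mul, norm_div, norm_pow, norm_pow, Complex.norm_natCast, mul_pow]
    ring
  rw [this]
  exact Real.summable_pow_div_factorial _

omit hν in
lemma exp_rep (p z : ℂ) :
    Complex.exp (p * z) = ∑' i : ℕ, p ^ i / (Nat.factorial i : ℂ) * z ^ i := by
  rw [Complex.exp_eq_exp_ℂ, NormedSpace.exp_eq_tsum_div]
  apply tsum_congr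
  intro i
  rw [mul_pow]
  ring

omit hν in
lemma sinh_rep (p z : ℂ) :
    Complex.sinh (p * z)
      = ∑' i : ℕ, (p ^ i / (Nat.factorial i : ℂ) - (-p) ^ i / (Nat.factorial i : ℂ)) / 2 * z ^ i := by
  rw [Complex.sinh]
  have h1 : Complex.exp (p * z) = ∑' i : ℕ, p ^ i / (Nat.factorial i : ℂ) * z ^ i := exp_rep p z
  have h2 : Complex.exp (-(p * z)) = ∑' i : ℕ, (-p) ^ i / (Nat.factorial i : ℂ) * z ^ i := by
    rw [show -(p * z) = (-p) * z by ring]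
    exact exp_rep (-p) z
  rw [h1, h2]
  have s1 : Summable fun i : ℕ => p ^ i / (Nat.factorial i : ℂ) * z ^ i :=
    (expE_summable p z).of_norm
  have s2 : Summable fun i : ℕ => (-p) ^ i / (Nat.factorial i : ℂ) * z ^ i :=
    (expE_summable (-p) z).of_norm
  rw [← Summable.tsum_sub s1 s2, ← tsum_div_const]
  apply tsum_congr
  intro i
  ring

omit hν in
lemma sinhE_summable (p z : ℂ) :
    Summable fun i : ℕ =>
      ‖(p ^ i / (Nat.factorial i : ℂ) - (-p) ^ i / (Nat.factorial i : ℂ)) / 2 * z ^ i‖ := by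
  refine Summable.of_nonneg_of_le (fun i => norm_nonneg _) ?_ ((expE_summable p z).add (expE_summable (-p) z))
  intro i
  have h0 : (p ^ i / (Nat.factorial i : ℂ) - (-p) ^ i / (Nat.factorial i : ℂ)) / 2 * z ^ i
      = (p ^ i / (Nat.factorial i : ℂ) * z ^ i - (-p) ^ i / (Nat.factorial i : ℂ) * z ^ i) / 2 := by
    ring
  rw [h0, norm_div]
  have h2 : ‖(2 : ℂ)‖ = 2 := by norm_num
  rw [h2]
  have h3 := norm_sub_le (p ^ i / (Nat.factorial i : ℂ) * z ^ i) ((-p) ^ i / (Nat.factorial i : ℂ) * z ^ i)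
  have h4 : (0:ℝ) ≤ ‖p ^ i / (Nat.factorial i : ℂ) * z ^ i - (-p) ^ i / (Nat.factorial i : ℂ) * z ^ i‖ := norm_nonneg _
  linarith

lemma Gamma_nu_one_ne : Complex.Gamma (ν + 1) ≠ 0 := by
  have := Gamma_ne hν 0
  simpa using this

omit hν in
lemma A_zero : A ν 0 = 1 / Complex.Gamma (ν + 1) := by
  simp [A]

omit hν in
lemma A_one : A ν 1 = 0 := A_odd ν (by decide)

end SinhBesselAux

open SinhBesselAux in
theorem sinh_besselJ_coeff_recurrence (ν p : ℂ) (hν : ∀ n : ℕ, 2 * ν + (n : ℂ) + 1 ≠ 0)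
    (u : ℕ → ℂ) (hu : ∀ n, u n = normCoeff ν (fun z => Complex.exp (p * z)) n)
    (v : ℕ → ℂ) (hv : ∀ n, v n = normCoeff ν (fun z => Complex.exp (-p * z)) n)
    (w : ℕ → ℂ) (hw : ∀ n, w n = normCoeff ν (fun z => Complex.sinh (p * z)) n) :
    (∀ n : ℕ, w n = (u n - v n) / 2) ∧ u 0 = 1 ∧ u 1 = p ∧ v 0 = 1 ∧ v 1 = -p ∧
    (∀ n : ℕ, 1 ≤ n →
      u (n + 1) = (p * (2 * ν + 2 * ((n : ℂ)) + 1) / ((((n : ℂ)) + 1) * (2 * ν + ((n : ℂ)) + 1))) * u n + (-((p ^ 2 + 1) / ((((n : ℂ)) + 1) * (2 * ν + ((n : ℂ)) + 1)))) * u (n - 1) ∧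
      v (n + 1) = (-(p * (2 * ν + 2 * ((n : ℂ)) + 1)) / ((((n : ℂ)) + 1) * (2 * ν + ((n : ℂ)) + 1))) * v n + (-((p ^ 2 + 1) / ((((n : ℂ)) + 1) * (2 * ν + ((n : ℂ)) + 1)))) * v (n - 1)) := by
  have hG1 : Complex.Gamma (ν + 1) ≠ 0 := Gamma_nu_one_ne hν
  -- coefficient sequences
  set eu : ℕ → ℂ := fun i => p ^ i / (Nat.factorial i : ℂ) with heu
  set ev : ℕ → ℂ := fun i => (-p) ^ i / (Nat.factorial i : ℂ) with hev
  set ew : ℕ → ℂ := fun i => (p ^ i / (Nat.factorial i : ℂ) - (-p) ^ i / (Nat.factorial i : ℂ)) / 2 with hew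
  have hu' : ∀ n, u n = Complex.Gamma (ν + 1) * S ν eu n := by
    intro n
    rw [hu n, normCoeff_eq hν eu _ (expE_summable p) (exp_rep p) n, S]
  have hv' : ∀ n, v n = Complex.Gamma (ν + 1) * S ν ev n := by
    intro n
    rw [hv n, normCoeff_eq hν ev _ (expE_summable (-p)) (exp_rep (-p)) n, S]
  have hw' : ∀ n, w n = Complex.Gamma (ν + 1) * S ν ew n := by
    intro n
    rw [hw n, normCoeff_eq hν ew _ (sinhE_summable p) (sinh_rep p) n, S]
  refine ⟨?_, ?_, ?_, ?_, ?_, ?_⟩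
  · intro n
    rw [hw' n, hu' n, hv' n, S, S, S, Finset.mul_sum, Finset.mul_sum, Finset.mul_sum,
      ← Finset.sum_sub_distrib, Finset.sum_div]
    apply Finset.sum_congr rfl
    intro i _
    simp only [heu, hev, hew]
    ring
  · have hs : S ν eu 0 = A ν 0 := by
      rw [S, Finset.sum_range_one]
      simp [heu]
    rw [hu' 0, hs, A_zero]
    field_simp
  · have hs : S ν eu 1 = p * (1 / Complex.Gamma (ν + 1)) := by
      rw [S, Finset.sum_range_succ, Finset.sum_range_one]
      simp [heu, A_zero, A_one, Nat.factorial]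
    rw [hu' 1, hs]
    field_simp
    try ring
  · have hs : S ν ev 0 = A ν 0 := by
      rw [S, Finset.sum_range_one]
      simp [hev]
    rw [hv' 0, hs, A_zero]
    field_simp
  · have hs : S ν ev 1 = (-p) * (1 / Complex.Gamma (ν + 1)) := by
      rw [S, Finset.sum_range_succ, Finset.sum_range_one]
      simp [hev, A_zero, A_one, Nat.factorial]
    rw [hv' 1, hs]
    field_simp
    try ring
  · intro n hn
    have hD : (((n : ℂ)) + 1) * (2 * ν + ((n : ℂ)) + 1) ≠ 0 := by
      apply mul_ne_zero
      · have := Nat.cast_add_one_ne_zero (R := ℂ) n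
        push_cast at this
        exact this
      · exact hν n
    have hEu : ∀ i : ℕ, ((i : ℂ) + 1) * eu (i + 1) = p * eu i := fun i => expE_rec p i
    have hEv : ∀ i : ℕ, ((i : ℂ) + 1) * ev (i + 1) = (-p) * ev i := fun i => expE_rec (-p) i
    have hru := S_rec hν p eu hEu n hn
    have hrv := S_rec hν (-p) ev hEv n hn
    constructor
    · rw [hu' (n + 1), hu' n, hu' (n - 1)]
      have hgoal : Complex.Gamma (ν + 1) * S ν eu (n + 1)
          = (p * (2 * ν + 2 * (n : ℂ) + 1) * (Complex.Gamma (ν + 1) * S ν eu n)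
              - (p ^ 2 + 1) * (Complex.Gamma (ν + 1) * S ν eu (n - 1)))
            / (((n : ℂ) + 1) * (2 * ν + (n : ℂ) + 1)) := by
        rw [eq_div_iff hD]
        linear_combination Complex.Gamma (ν + 1) * hru
      rw [hgoal]
      ring
    · rw [hv' (n + 1), hv' n, hv' (n - 1)]
      have hgoal : Complex.Gamma (ν + 1) * S ν ev (n + 1)
          = (-(p * (2 * ν + 2 * (n : ℂ) + 1)) * (Complex.Gamma (ν + 1) * S ν ev n)
              - (p ^ 2 + 1) * (Complex.Gamma (ν + 1) * S ν ev (n - 1)))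
            / (((n : ℂ) + 1) * (2 * ν + (n : ℂ) + 1)) := by
        rw [eq_div_iff hD]
        linear_combination Complex.Gamma (ν + 1) * hrv
      rw [hgoal]
      ring
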